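/- Let H be a Hopf algebra over a commutative ring R and K a normal Hopf subalgebra with quotient Hopf algebra H̄ = H/K⁺H, where K⁺ = K ∩ ker ε. If K and H̄ are both separable R-algebras, then H is a separable R-algebra. Concretely, if t is a left integral in K with ε(t)=1 and s̄ a left integral in H̄ with ε(s)=1, then st is a left integral in H with ε(st)=1. -/

import Mathlib

universe u v w

open TensorProduct

/-- A left integral: `h * t = ε(h) • t` for all `h`. -/
def IsLeftIntegral (R : Type u) {H : Type v} [CommRing R] [Ring H] [HopfAlgebra R H]
    (t : H) : Prop :=
  ∀ h : H, h * t = Coalgebra.counit (R := R) h • t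

/-- `T` is a separable algebra over the commutative ring `S`. -/
def IsSeparableAlgebra (S : Type u) (T : Type v) [CommRing S] [Ring T] [Algebra S T] : Prop :=
  ∃ e : T ⊗[S] T, LinearMap.mul' S T e = 1 ∧
    ∀ t : T, (t ⊗ₜ[S] (1 : T)) * e = e * ((1 : T) ⊗ₜ[S] t)

section Helpers
open Coalgebra HopfAlgebra
variable {R : Type u} {H : Type v} [CommRing R] [Ring H] [HopfAlgebra R H]

private lemma myRepr_counit_smul {ι : Type*} {a : H} (rp : Coalgebra.Repr R a ι) :
    ∑ i ∈ rp.index, Coalgebra.counit (R := R) (rp.left i) • rp.right i = a := by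
  have h := congrArg (TensorProduct.lid R H) (Coalgebra.sum_counit_tmul_eq rp)
  simp only [map_sum, TensorProduct.lid_tmul, one_smul] at h
  exact h

private lemma myRepr_smul_counit {ι : Type*} {a : H} (rp : Coalgebra.Repr R a ι) :
    ∑ i ∈ rp.index, Coalgebra.counit (R := R) (rp.right i) • rp.left i = a := by
  have h := congrArg (TensorProduct.rid R H) (Coalgebra.sum_tmul_counit_eq rp)
  simp only [map_sum, TensorProduct.rid_tmul, one_smul] at h
  exact h

private noncomputable def tri (g₁ g₂ g₃ : H →ₗ[R] H) : H ⊗[R] (H ⊗[R] H) →ₗ[R] H :=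
  LinearMap.mul' R H ∘ₗ TensorProduct.map g₁ (LinearMap.mul' R H ∘ₗ TensorProduct.map g₂ g₃)

@[simp] private lemma tri_apply (g₁ g₂ g₃ : H →ₗ[R] H) (x y z : H) :
    tri g₁ g₂ g₃ (x ⊗ₜ[R] (y ⊗ₜ[R] z)) = g₁ x * (g₂ y * g₃ z) := by
  simp [tri]

private noncomputable def myReprMul {ι κ : Type*} {a b : H} (ra : Coalgebra.Repr R a ι) (rb : Coalgebra.Repr R b κ) :
    Coalgebra.Repr R (a * b) (ι × κ) where
  index := ra.index ×ˢ rb.index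
  left p := ra.left p.1 * rb.left p.2
  right p := ra.right p.1 * rb.right p.2
  eq := by
    rw [Finset.sum_product]
    calc ∑ i ∈ ra.index, ∑ j ∈ rb.index,
          (ra.left i * rb.left j) ⊗ₜ[R] (ra.right i * rb.right j)
        = (∑ i ∈ ra.index, ra.left i ⊗ₜ[R] ra.right i) *
          (∑ j ∈ rb.index, rb.left j ⊗ₜ[R] rb.right j) := by
          rw [Finset.sum_mul_sum]
          exact Finset.sum_congr rfl fun i _ => Finset.sum_congr rfl fun j _ => by
            rw [Algebra.TensorProduct.tmul_mul_tmul]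
      _ = CoalgebraStruct.comul (a * b) := by
          rw [ra.eq, rb.eq, ← Bialgebra.comul_mul]

private lemma my_antipode_mul (a b : H) :
    HopfAlgebra.antipode (R := R) (a * b) =
      HopfAlgebra.antipode (R := R) b * HopfAlgebra.antipode (R := R) a := by
  set S : H →ₗ[R] H := HopfAlgebra.antipode (R := R) with hS
  let ra := ℛ R a
  let rb := ℛ R b
  let rA : ∀ i, Coalgebra.Repr R (ra.left i) (H × H) := fun i => ℛ R (ra.left i)
  let rA' : ∀ i, Coalgebra.Repr R (ra.right i) (H × H) := fun i => ℛ R (ra.right i)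
  let rB : ∀ j, Coalgebra.Repr R (rb.left j) (H × H) := fun j => ℛ R (rb.left j)
  let rB' : ∀ j, Coalgebra.Repr R (rb.right j) (H × H) := fun j => ℛ R (rb.right j)
  have hSb : S b = ∑ j ∈ rb.index, Coalgebra.counit (R := R) (rb.left j) • S (rb.right j) := by
    conv_lhs => rw [← myRepr_counit_smul rb]
    rw [map_sum]; simp only [map_smul]
  have hSa : S a = ∑ i ∈ ra.index, Coalgebra.counit (R := R) (ra.left i) • S (ra.right i) := by
    conv_lhs => rw [← myRepr_counit_smul ra]
    rw [map_sum]; simp only [map_smul]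
  calc S (a * b)
      = ∑ j ∈ rb.index, ∑ i ∈ ra.index,
          (Coalgebra.counit (R := R) (rb.right j) • (Coalgebra.counit (R := R) (ra.right i) •
            S (ra.left i * rb.left j))) := by
        conv_lhs => rw [show a * b =
          (∑ i ∈ ra.index, Coalgebra.counit (R := R) (ra.right i) • ra.left i) *
          (∑ j ∈ rb.index, Coalgebra.counit (R := R) (rb.right j) • rb.left j) by
            rw [myRepr_smul_counit ra, myRepr_smul_counit rb]]
        rw [Finset.sum_mul_sum, map_sum, Finset.sum_comm]
        refine Finset.sum_congr rfl fun j _ => ?_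
        rw [map_sum]
        refine Finset.sum_congr rfl fun i _ => ?_
        rw [smul_mul_smul_comm, map_smul, mul_comm, mul_smul]
    _ = ∑ j ∈ rb.index, Coalgebra.counit (R := R) (rb.right j) •
          ∑ i ∈ ra.index, Coalgebra.counit (R := R) (ra.right i) • S (ra.left i * rb.left j) := by
        refine Finset.sum_congr rfl fun j _ => ?_
        rw [Finset.smul_sum]
    _ = ∑ j ∈ rb.index, Coalgebra.counit (R := R) (rb.right j) •
          ∑ i ∈ ra.index, ∑ p ∈ (rA i).index,
            S ((rA i).left p * rb.left j) * ((rA i).right p * S (ra.right i)) := by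
        refine Finset.sum_congr rfl fun j _ => congrArg _ ?_
        -- a-shuffle, backwards
        have sha := Coalgebra.sum_tmul_tmul_eq ra rA rA'
        have h := congrArg (tri (S ∘ₗ LinearMap.mulRight R (rb.left j)) LinearMap.id S) sha
        simp only [map_sum, tri_apply, LinearMap.comp_apply, LinearMap.mulRight_apply,
          LinearMap.id_apply] at h
        -- h : ∑ i ∑ p, S ((rA i).left p * lb j) * ((rA i).right p * S (ra.right i))
        --   = ∑ i ∑ p, S (ra.left i * lb j) * ((rA' i).left p * S ((rA' i).right p))
        rw [h]
        refine Finset.sum_congr rfl fun i _ => ?_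
        rw [← Finset.mul_sum, sum_mul_antipode_eq_smul (rA' i), mul_smul_comm, mul_one]
    _ = ∑ i ∈ ra.index, ∑ p ∈ (rA i).index, ∑ j ∈ rb.index,
          Coalgebra.counit (R := R) (rb.right j) •
            (S ((rA i).left p * rb.left j) * ((rA i).right p * S (ra.right i))) := by
        simp only [Finset.smul_sum]
        rw [Finset.sum_comm]
        exact Finset.sum_congr rfl fun i _ => Finset.sum_comm
    _ = ∑ i ∈ ra.index, ∑ p ∈ (rA i).index, ∑ j ∈ rb.index, ∑ q ∈ (rB j).index,
          S ((rA i).left p * (rB j).left q) *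
            (((rA i).right p * (rB j).right q) * (S (rb.right j) * S (ra.right i))) := by
        refine Finset.sum_congr rfl fun i _ => Finset.sum_congr rfl fun p _ => ?_
        have h := congrArg (tri (S ∘ₗ LinearMap.mulLeft R ((rA i).left p))
          (LinearMap.mulLeft R ((rA i).right p))
          (LinearMap.mulRight R (S (ra.right i)) ∘ₗ S))
          (Coalgebra.sum_tmul_tmul_eq rb rB rB')
        simp only [map_sum, tri_apply, LinearMap.comp_apply, LinearMap.mulLeft_apply,
          LinearMap.mulRight_apply] at h
        rw [h]
        refine Finset.sum_congr rfl fun j _ => ?_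
        rw [← Finset.mul_sum]
        have hq : ∑ q ∈ (rB' j).index,
            ((rA i).right p * (rB' j).left q) * (S ((rB' j).right q) * S (ra.right i)) =
            Coalgebra.counit (R := R) (rb.right j) • ((rA i).right p * S (ra.right i)) := by
          calc ∑ q ∈ (rB' j).index,
              ((rA i).right p * (rB' j).left q) * (S ((rB' j).right q) * S (ra.right i))
              = ∑ q ∈ (rB' j).index,
                (rA i).right p * (((rB' j).left q * S ((rB' j).right q)) * S (ra.right i)) := by
                refine Finset.sum_congr rfl fun q _ => ?_
                rw [mul_assoc, ← mul_assoc ((rB' j).left q)]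
            _ = (rA i).right p * ((∑ q ∈ (rB' j).index,
                  (rB' j).left q * S ((rB' j).right q)) * S (ra.right i)) := by
                rw [← Finset.mul_sum, ← Finset.sum_mul]
            _ = Coalgebra.counit (R := R) (rb.right j) • ((rA i).right p * S (ra.right i)) := by
                rw [sum_mul_antipode_eq_smul (rB' j), smul_mul_assoc, one_mul, mul_smul_comm]
        rw [hq, mul_smul_comm]
    _ = ∑ i ∈ ra.index, ∑ j ∈ rb.index, ∑ p ∈ (rA i).index, ∑ q ∈ (rB j).index,
          S ((rA i).left p * (rB j).left q) *
            (((rA i).right p * (rB j).right q) * (S (rb.right j) * S (ra.right i))) :=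
        Finset.sum_congr rfl fun i _ => Finset.sum_comm
    _ = S b * S a := by
        refine Eq.symm ?_
        calc S b * S a
            = ∑ i ∈ ra.index, ∑ j ∈ rb.index,
                ((Coalgebra.counit (R := R) (ra.left i) * Coalgebra.counit (R := R) (rb.left j)) •
                  (1 : H)) * (S (rb.right j) * S (ra.right i)) := by
              rw [hSb, hSa, Finset.sum_mul_sum, Finset.sum_comm]
              refine Finset.sum_congr rfl fun i _ => Finset.sum_congr rfl fun j _ => ?_
              rw [smul_mul_smul_comm, mul_comm (Coalgebra.counit (R := R) (rb.left j)) _,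
                smul_mul_assoc, one_mul]
          _ = ∑ i ∈ ra.index, ∑ j ∈ rb.index, ∑ p ∈ (rA i).index, ∑ q ∈ (rB j).index,
                S ((rA i).left p * (rB j).left q) *
                  (((rA i).right p * (rB j).right q) * (S (rb.right j) * S (ra.right i))) := by
              refine Finset.sum_congr rfl fun i _ => Finset.sum_congr rfl fun j _ => ?_
              rw [show Coalgebra.counit (R := R) (ra.left i) * Coalgebra.counit (R := R) (rb.left j)
                  = Coalgebra.counit (R := R) (ra.left i * rb.left j) from
                  (Bialgebra.counit_mul (ra.left i) (rb.left j)).symm]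
              have expand : (Coalgebra.counit (R := R) (ra.left i * rb.left j)) • (1 : H)
                  = ∑ p ∈ (rA i).index, ∑ q ∈ (rB j).index,
                      S ((rA i).left p * (rB j).left q) *
                        ((rA i).right p * (rB j).right q) := by
                rw [← sum_antipode_mul_eq_smul (myReprMul (rA i) (rB j))]
                exact Finset.sum_product _ _ _
              rw [expand, Finset.sum_mul]
              refine Finset.sum_congr rfl fun p _ => ?_
              rw [Finset.sum_mul]
              exact Finset.sum_congr rfl fun q _ => mul_assoc _ _ _

private lemma myRepr_counit_counit {ι : Type*} {a : H} (rp : Coalgebra.Repr R a ι) :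
    ∑ i ∈ rp.index, Coalgebra.counit (R := R) (rp.left i) * Coalgebra.counit (R := R) (rp.right i)
      = Coalgebra.counit (R := R) a := by
  have h := congrArg (Coalgebra.counit (R := R)) (myRepr_counit_smul rp)
  simpa [map_sum, smul_eq_mul] using h

private lemma my_counit_antipode (a : H) :
    Coalgebra.counit (R := R) (HopfAlgebra.antipode (R := R) a) = Coalgebra.counit (R := R) a := by
  let rp := ℛ R a
  have h1 := congrArg (Coalgebra.counit (R := R)) (HopfAlgebra.sum_antipode_mul_eq_algebraMap_counit rp)
  simp only [map_sum, Bialgebra.counit_mul, Bialgebra.counit_algebraMap] at h1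
  calc Coalgebra.counit (R := R) (HopfAlgebra.antipode (R := R) a)
      = Coalgebra.counit (R := R) (HopfAlgebra.antipode (R := R)
          (∑ i ∈ rp.index, Coalgebra.counit (R := R) (rp.right i) • rp.left i)) := by
        rw [myRepr_smul_counit]
    _ = ∑ i ∈ rp.index, Coalgebra.counit (R := R)
          (HopfAlgebra.antipode (R := R) (rp.left i)) * Coalgebra.counit (R := R) (rp.right i) := by
        rw [map_sum, map_sum]
        refine Finset.sum_congr rfl fun i _ => ?_
        rw [map_smul, map_smul, smul_eq_mul, mul_comm]
    _ = Coalgebra.counit (R := R) a := h1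

private lemma counit_P (k y : H) :
    Coalgebra.counit (R := R) (LinearMap.mul' R H
      ((TensorProduct.map (HopfAlgebra.antipode (R := R)) (LinearMap.mulLeft R k))
        (Coalgebra.comul y))) = Coalgebra.counit (R := R) k * Coalgebra.counit (R := R) y := by
  let ry := ℛ R y
  rw [show Coalgebra.comul (R := R) y = CoalgebraStruct.comul (R := R) y from rfl, ← ry.eq,
    map_sum, map_sum]
  simp only [map_sum, TensorProduct.map_tmul, LinearMap.mul'_apply, LinearMap.mulLeft_apply,
    Bialgebra.counit_mul, my_counit_antipode]
  calc ∑ j ∈ ry.index, Coalgebra.counit (R := R) (ry.left j) *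
        (Coalgebra.counit (R := R) k * Coalgebra.counit (R := R) (ry.right j))
      = Coalgebra.counit (R := R) k * ∑ j ∈ ry.index,
          Coalgebra.counit (R := R) (ry.left j) * Coalgebra.counit (R := R) (ry.right j) := by
        rw [Finset.mul_sum]
        exact Finset.sum_congr rfl fun j _ => by ring
    _ = Coalgebra.counit (R := R) k * Coalgebra.counit (R := R) y := by
        rw [myRepr_counit_counit ry]

private lemma aux_mul_integral_zero (K : Subalgebra R H)
    (hnormR : ∀ (h : H), ∀ k ∈ K, LinearMap.mul' R H
      ((TensorProduct.map (HopfAlgebra.antipode (R := R)) (LinearMap.mulLeft R k))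
        (Coalgebra.comul h)) ∈ K)
    (t : H) (ht : ∀ k ∈ K, k * t = Coalgebra.counit (R := R) k • t)
    (k : H) (hk : k ∈ K) (hk0 : Coalgebra.counit (R := R) k = 0) (h : H) :
    k * h * t = 0 := by
  set P : H → H := fun y => LinearMap.mul' R H
    ((TensorProduct.map (HopfAlgebra.antipode (R := R)) (LinearMap.mulLeft R k))
      (Coalgebra.comul y)) with hP
  have hPt : ∀ y : H, P y * t = 0 := by
    intro y
    rw [hP, ht _ (hnormR y k hk), counit_P, hk0, zero_mul, zero_smul]
  let rh := ℛ R h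
  let rh₁ : ∀ i, Coalgebra.Repr R (rh.left i) (H × H) := fun i => ℛ R (rh.left i)
  let rh₂ : ∀ i, Coalgebra.Repr R (rh.right i) (H × H) := fun i => ℛ R (rh.right i)
  have h1 := congrArg (tri LinearMap.id (HopfAlgebra.antipode (R := R)) (LinearMap.mulLeft R k))
    (Coalgebra.sum_tmul_tmul_eq rh rh₁ rh₂)
  simp only [map_sum, tri_apply, LinearMap.id_apply, LinearMap.mulLeft_apply] at h1
  have key : k * h = ∑ i ∈ rh.index, rh.left i * P (rh.right i) := by
    calc k * h
        = ∑ i ∈ rh.index, Coalgebra.counit (R := R) (rh.left i) • (k * rh.right i) := by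
          conv_lhs => rw [← myRepr_counit_smul rh]
          rw [Finset.mul_sum]
          exact Finset.sum_congr rfl fun i _ => mul_smul_comm _ _ _
      _ = ∑ i ∈ rh.index, ∑ j ∈ (rh₁ i).index, (rh₁ i).left j *
            (HopfAlgebra.antipode (R := R) ((rh₁ i).right j) * (k * rh.right i)) := by
          refine Finset.sum_congr rfl fun i _ => Eq.symm ?_
          calc ∑ j ∈ (rh₁ i).index, (rh₁ i).left j *
                (HopfAlgebra.antipode (R := R) ((rh₁ i).right j) * (k * rh.right i))
              = ∑ j ∈ (rh₁ i).index, ((rh₁ i).left j *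
                  HopfAlgebra.antipode (R := R) ((rh₁ i).right j)) * (k * rh.right i) := by
                exact Finset.sum_congr rfl fun j _ => (mul_assoc _ _ _).symm
            _ = (∑ j ∈ (rh₁ i).index, (rh₁ i).left j *
                  HopfAlgebra.antipode (R := R) ((rh₁ i).right j)) * (k * rh.right i) := by
                rw [Finset.sum_mul]
            _ = Coalgebra.counit (R := R) (rh.left i) • (k * rh.right i) := by
                rw [sum_mul_antipode_eq_smul (rh₁ i), smul_mul_assoc, one_mul]
      _ = ∑ i ∈ rh.index, ∑ j ∈ (rh₂ i).index, rh.left i *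
            (HopfAlgebra.antipode (R := R) ((rh₂ i).left j) * (k * (rh₂ i).right j)) := h1
      _ = ∑ i ∈ rh.index, rh.left i * P (rh.right i) := by
          refine Finset.sum_congr rfl fun i _ => ?_
          rw [← Finset.mul_sum]
          congr 1
          rw [hP]
          show _ = LinearMap.mul' R H
            ((TensorProduct.map (HopfAlgebra.antipode (R := R)) (LinearMap.mulLeft R k))
              (CoalgebraStruct.comul (rh.right i)))
          rw [← (rh₂ i).eq, map_sum, map_sum]
          simp only [TensorProduct.map_tmul, LinearMap.mul'_apply, LinearMap.mulLeft_apply]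
  rw [key, Finset.sum_mul]
  refine Finset.sum_eq_zero fun i _ => ?_
  rw [mul_assoc, hPt, mul_zero]

private noncomputable def tri2 (g₁ g₂ g₃ : H →ₗ[R] H) : H ⊗[R] (H ⊗[R] H) →ₗ[R] H ⊗[R] H :=
  TensorProduct.map g₁ (LinearMap.mul' R H ∘ₗ TensorProduct.map g₂ g₃)

@[simp] private lemma tri2_apply (g₁ g₂ g₃ : H →ₗ[R] H) (x y z : H) :
    tri2 g₁ g₂ g₃ (x ⊗ₜ[R] (y ⊗ₜ[R] z)) = g₁ x ⊗ₜ[R] (g₂ y * g₃ z) := by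
  simp [tri2]

private lemma my_commute (w : H)
    (hw : ∀ h : H, h * w = Coalgebra.counit (R := R) h • w) (x : H) :
    (x ⊗ₜ[R] (1 : H)) * ((HopfAlgebra.antipode (R := R)).lTensor H (Coalgebra.comul w))
      = ((HopfAlgebra.antipode (R := R)).lTensor H (Coalgebra.comul w)) * ((1 : H) ⊗ₜ[R] x) := by
  set S : H →ₗ[R] H := HopfAlgebra.antipode (R := R) with hS
  set e : H ⊗[R] H := S.lTensor H (Coalgebra.comul w) with he
  let rw_ := ℛ R w
  let rx := ℛ R x
  let rx₁ : ∀ i, Coalgebra.Repr R (rx.left i) (H × H) := fun i => ℛ R (rx.left i)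
  let rx₂ : ∀ i, Coalgebra.Repr R (rx.right i) (H × H) := fun i => ℛ R (rx.right i)
  have hesum : e = ∑ ω ∈ rw_.index, rw_.left ω ⊗ₜ[R] S (rw_.right ω) := by
    rw [he, show Coalgebra.comul (R := R) w = CoalgebraStruct.comul w from rfl, ← rw_.eq, map_sum]
    simp only [LinearMap.lTensor_tmul]
  -- the pivot quantity
  have pivotA : ∑ i ∈ rx.index, (LinearMap.lTensor H (LinearMap.mulRight R (rx.right i) ∘ₗ S))
        (Coalgebra.comul (rx.left i * w))
      = e * ((1 : H) ⊗ₜ[R] x) := by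
    have step : ∀ i ∈ rx.index, (LinearMap.lTensor H (LinearMap.mulRight R (rx.right i) ∘ₗ S))
        (Coalgebra.comul (rx.left i * w)) = ∑ ω ∈ rw_.index,
          Coalgebra.counit (R := R) (rx.left i) •
            (rw_.left ω ⊗ₜ[R] (S (rw_.right ω) * rx.right i)) := by
      intro i _
      rw [hw (rx.left i), map_smul, map_smul,
        show Coalgebra.comul (R := R) w = CoalgebraStruct.comul w from rfl, ← rw_.eq,
        map_sum, Finset.smul_sum]
      simp only [LinearMap.lTensor_tmul, LinearMap.comp_apply, LinearMap.mulRight_apply]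
    rw [Finset.sum_congr rfl step, hesum, Finset.sum_mul, Finset.sum_comm]
    refine Finset.sum_congr rfl fun ω _ => ?_
    rw [Algebra.TensorProduct.tmul_mul_tmul, mul_one]
    calc ∑ i ∈ rx.index, Coalgebra.counit (R := R) (rx.left i) •
          (rw_.left ω ⊗ₜ[R] (S (rw_.right ω) * rx.right i))
        = ∑ i ∈ rx.index, rw_.left ω ⊗ₜ[R]
            (S (rw_.right ω) * (Coalgebra.counit (R := R) (rx.left i) • rx.right i)) := by
          refine Finset.sum_congr rfl fun i _ => ?_
          rw [mul_smul_comm, TensorProduct.tmul_smul]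
      _ = rw_.left ω ⊗ₜ[R] (S (rw_.right ω) *
            ∑ i ∈ rx.index, Coalgebra.counit (R := R) (rx.left i) • rx.right i) := by
          rw [← TensorProduct.tmul_sum, ← Finset.mul_sum]
      _ = rw_.left ω ⊗ₜ[R] (S (rw_.right ω) * x) := by rw [myRepr_counit_smul rx]
  have pivotB : ∑ i ∈ rx.index, (LinearMap.lTensor H (LinearMap.mulRight R (rx.right i) ∘ₗ S))
        (Coalgebra.comul (rx.left i * w))
      = (x ⊗ₜ[R] (1 : H)) * e := by
    have step : ∀ i ∈ rx.index, (LinearMap.lTensor H (LinearMap.mulRight R (rx.right i) ∘ₗ S))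
        (Coalgebra.comul (rx.left i * w)) = ∑ p ∈ (rx₁ i).index, ∑ ω ∈ rw_.index,
          ((rx₁ i).left p * rw_.left ω) ⊗ₜ[R]
            ((S (rw_.right ω) * S ((rx₁ i).right p)) * rx.right i) := by
      intro i _
      have hcm : Coalgebra.comul (R := R) (rx.left i * w) =
          ∑ p ∈ (rx₁ i).index, ∑ ω ∈ rw_.index,
            ((rx₁ i).left p * rw_.left ω) ⊗ₜ[R] ((rx₁ i).right p * rw_.right ω) := by
        rw [Bialgebra.comul_mul,
          show Coalgebra.comul (R := R) (rx.left i) = CoalgebraStruct.comul (rx.left i) from rfl,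
          show Coalgebra.comul (R := R) w = CoalgebraStruct.comul w from rfl,
          ← (rx₁ i).eq, ← rw_.eq, Finset.sum_mul_sum]
        exact Finset.sum_congr rfl fun p _ => Finset.sum_congr rfl fun ω _ => by
          rw [Algebra.TensorProduct.tmul_mul_tmul]
      rw [hcm, map_sum]
      refine Finset.sum_congr rfl fun p _ => ?_
      rw [map_sum]
      refine Finset.sum_congr rfl fun ω _ => ?_
      simp only [LinearMap.lTensor_tmul, LinearMap.comp_apply, LinearMap.mulRight_apply]
      rw [hS, my_antipode_mul]
    rw [Finset.sum_congr rfl step]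
    -- x-shuffle
    have h1 := congrArg (fun z : H ⊗[R] (H ⊗[R] H) => ∑ ω ∈ rw_.index,
        (tri2 (LinearMap.mulRight R (rw_.left ω)) (LinearMap.mulLeft R (S (rw_.right ω)) ∘ₗ S)
          LinearMap.id) z)
      (Coalgebra.sum_tmul_tmul_eq rx rx₁ rx₂)
    simp only [map_sum, tri2_apply, LinearMap.comp_apply, LinearMap.mulRight_apply,
      LinearMap.mulLeft_apply, LinearMap.id_apply] at h1
    -- h1 : Σ_ω Σ_i Σ_p ((rx₁ i).left p * w₁ω) ⊗ ((S w₂ω * S ((rx₁ i).right p)) * rx.right i)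
    --    = Σ_ω Σ_i Σ_p (rx.left i * w₁ω) ⊗ ((S w₂ω * S ((rx₂ i).left p)) * (rx₂ i).right p)
    calc ∑ i ∈ rx.index, ∑ p ∈ (rx₁ i).index, ∑ ω ∈ rw_.index,
          ((rx₁ i).left p * rw_.left ω) ⊗ₜ[R]
            ((S (rw_.right ω) * S ((rx₁ i).right p)) * rx.right i)
        = ∑ ω ∈ rw_.index, ∑ i ∈ rx.index, ∑ p ∈ (rx₁ i).index,
          ((rx₁ i).left p * rw_.left ω) ⊗ₜ[R]
            ((S (rw_.right ω) * S ((rx₁ i).right p)) * rx.right i) := by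
          rw [Finset.sum_comm]
          exact Finset.sum_congr rfl fun i _ => Finset.sum_comm
      _ = ∑ ω ∈ rw_.index, ∑ i ∈ rx.index, ∑ p ∈ (rx₂ i).index,
          (rx.left i * rw_.left ω) ⊗ₜ[R]
            ((S (rw_.right ω) * S ((rx₂ i).left p)) * (rx₂ i).right p) := h1
      _ = ∑ ω ∈ rw_.index, ∑ i ∈ rx.index,
          Coalgebra.counit (R := R) (rx.right i) •
            ((rx.left i * rw_.left ω) ⊗ₜ[R] S (rw_.right ω)) := by
          refine Finset.sum_congr rfl fun ω _ => Finset.sum_congr rfl fun i _ => ?_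
          calc ∑ p ∈ (rx₂ i).index, (rx.left i * rw_.left ω) ⊗ₜ[R]
                ((S (rw_.right ω) * S ((rx₂ i).left p)) * (rx₂ i).right p)
              = (rx.left i * rw_.left ω) ⊗ₜ[R] (S (rw_.right ω) *
                  ∑ p ∈ (rx₂ i).index, S ((rx₂ i).left p) * (rx₂ i).right p) := by
                rw [Finset.mul_sum, TensorProduct.tmul_sum]
                exact Finset.sum_congr rfl fun p _ => by rw [mul_assoc]
            _ = Coalgebra.counit (R := R) (rx.right i) •
                  ((rx.left i * rw_.left ω) ⊗ₜ[R] S (rw_.right ω)) := by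
                rw [sum_antipode_mul_eq_smul (rx₂ i), mul_smul_comm, mul_one,
                  TensorProduct.tmul_smul]
      _ = (x ⊗ₜ[R] (1 : H)) * e := by
          rw [hesum, Finset.mul_sum]
          refine Finset.sum_congr rfl fun ω _ => ?_
          rw [Algebra.TensorProduct.tmul_mul_tmul, one_mul]
          calc ∑ i ∈ rx.index, Coalgebra.counit (R := R) (rx.right i) •
                ((rx.left i * rw_.left ω) ⊗ₜ[R] S (rw_.right ω))
              = ∑ i ∈ rx.index, ((Coalgebra.counit (R := R) (rx.right i) • rx.left i)
                  * rw_.left ω) ⊗ₜ[R] S (rw_.right ω) := by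
                refine Finset.sum_congr rfl fun i _ => ?_
                rw [smul_mul_assoc, TensorProduct.smul_tmul']
              _ = ((∑ i ∈ rx.index, Coalgebra.counit (R := R) (rx.right i) • rx.left i)
                  * rw_.left ω) ⊗ₜ[R] S (rw_.right ω) := by
                rw [← TensorProduct.sum_tmul, ← Finset.sum_mul]
              _ = (x * rw_.left ω) ⊗ₜ[R] S (rw_.right ω) := by rw [myRepr_smul_counit rx]
  rw [← pivotA, ← pivotB]

/-- Let `K` be a normal Hopf subalgebra of `H` (a pure subalgebra closed under `Δ`, `S` and
both adjoint actions), and let `K⁺H` be the ideal generated by `K⁺ = K ∩ ker ε`. If `t` is a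
left integral of `K` with `ε(t) = 1` and `s ∈ H` maps to a left integral of `H̄ = H/K⁺H` with
`ε(s) = 1`, then `st` is a left integral of `H` with `ε(st) = 1`; consequently (this being the
separability criterion) `H` is a separable `R`-algebra.  In particular if `K` and `H̄` are
separable `R`-algebras then so is `H`. -/
theorem separable_of_normal_hopf_subalgebra_and_quotient (R : Type u) (H : Type v)
    [CommRing R] [Ring H] [HopfAlgebra R H] (K : Subalgebra R H)
    -- `K` is a pure `R`-submodule of `H`:
    (hpure : ∀ (M : Type w) (_ : AddCommGroup M) (_ : Module R M),
      Function.Injective (LinearMap.rTensor M (Subalgebra.toSubmodule K).subtype))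
    -- `Δ(K) ⊆ K ⊗ K`:
    (hcomul : ∀ k ∈ K, Coalgebra.comul (R := R) k ∈
      LinearMap.range (TensorProduct.map (Subalgebra.toSubmodule K).subtype
        (Subalgebra.toSubmodule K).subtype))
    -- `S(K) ⊆ K`:
    (hantipode : ∀ k ∈ K, HopfAlgebra.antipode (R := R) k ∈ K)
    -- normality: `Σ h₁ k S(h₂) ∈ K` and `Σ S(h₁) k h₂ ∈ K`:
    (hnormL : ∀ (h : H), ∀ k ∈ K, LinearMap.mul' R H
      ((TensorProduct.map (LinearMap.mulRight R k) (HopfAlgebra.antipode (R := R)))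
        (Coalgebra.comul h)) ∈ K)
    (hnormR : ∀ (h : H), ∀ k ∈ K, LinearMap.mul' R H
      ((TensorProduct.map (HopfAlgebra.antipode (R := R)) (LinearMap.mulLeft R k))
        (Coalgebra.comul h)) ∈ K)
    -- `t` is a left integral of `K` with `ε(t) = 1`:
    (t : H) (htK : t ∈ K) (ht : ∀ k ∈ K, k * t = Coalgebra.counit (R := R) k • t)
    (htε : Coalgebra.counit (R := R) t = 1)
    -- `s` maps to a left integral of `H̄ = H/K⁺H` and `ε(s) = 1`:
    (s : H)
    (hs : ∀ h : H, h * s - Coalgebra.counit (R := R) h • s ∈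
      Submodule.span R {x : H | ∃ k ∈ K, Coalgebra.counit (R := R) k = 0 ∧
        ∃ h' : H, x = k * h'})
    (hsε : Coalgebra.counit (R := R) s = 1) :
    IsLeftIntegral R (s * t) ∧ Coalgebra.counit (R := R) (s * t) = 1 ∧
      IsSeparableAlgebra R H := by
  have hker : ∀ x ∈ Submodule.span R {x : H | ∃ k ∈ K, Coalgebra.counit (R := R) k = 0 ∧
      ∃ h' : H, x = k * h'}, x * t = 0 := by
    intro x hx
    have hle : Submodule.span R {x : H | ∃ k ∈ K, Coalgebra.counit (R := R) k = 0 ∧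
        ∃ h' : H, x = k * h'} ≤ LinearMap.ker (LinearMap.mulRight R t) := by
      rw [Submodule.span_le]
      rintro y ⟨k, hkK, hk0, h', rfl⟩
      simp only [SetLike.mem_coe, LinearMap.mem_ker, LinearMap.mulRight_apply]
      exact aux_mul_integral_zero K hnormR t ht k hkK hk0 h'
    simpa using hle hx
  have hint : IsLeftIntegral R (s * t) := by
    intro h
    have h0 : (h * s - Coalgebra.counit (R := R) h • s) * t = 0 := hker _ (hs h)
    rw [← mul_assoc, ← sub_add_cancel (h * s) (Coalgebra.counit (R := R) h • s), add_mul, h0,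
      zero_add, smul_mul_assoc]
  have hε : Coalgebra.counit (R := R) (s * t) = 1 := by
    rw [Bialgebra.counit_mul, hsε, htε, one_mul]
  refine ⟨hint, hε, ?_⟩
  refine ⟨(HopfAlgebra.antipode (R := R)).lTensor H (Coalgebra.comul (s * t)), ?_, ?_⟩
  · rw [HopfAlgebra.mul_antipode_lTensor_comul_apply, hε, map_one]
  · exact fun x => my_commute (s * t) hint x
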